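/- arXiv:1212.1650 — 2 statements merged into one kernel-verified Lean document; each statement's English description precedes it below -/
import Mathlib

section
/- The (n+1)-dimensional solvable Lie algebra τ_{n+1,2} with basis {x_1,...,x_n,f}, where the nilradical brackets are [f, x_i] = x_i for i = 1,...,n−1 and all brackets among the x_i and with x_n vanish, has index n − 1. -/
open Module

noncomputable def lieStab (K : Type*) {L : Type*} [Field K] [LieRing L] [LieAlgebra K L]
    (f : Module.Dual K L) : Submodule K L where
  carrier := {x | ∀ y, f ⁅x, y⁆ = 0}
  add_mem' := by
    intro a b ha hb y
    rw [add_lie, map_add, ha y, hb y, add_zero]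
  zero_mem' := by intro y; simp
  smul_mem' := by
    intro t a ha y
    rw [smul_lie, map_smul, ha y, smul_zero]

noncomputable def lieIndex (K L : Type*) [Field K] [LieRing L] [LieAlgebra K L] : ℕ :=
  ⨅ f : Module.Dual K L, Module.finrank K (lieStab K f)

theorem stmt18 (K : Type*) [RCLike K]
    (L : Type*) [LieRing L] [LieAlgebra K L]
    (n : ℕ) (hn : 2 ≤ n)
    (x : ℕ → L)
    (hli : LinearIndependent K fun i : Fin (n + 1) => x (i.1 + 1))
    (hsp : Submodule.span K (Set.range fun i : Fin (n + 1) => x (i.1 + 1)) = ⊤)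
    (hbr : ∀ i, 1 ≤ i → i ≤ n - 1 → ⁅x (n + 1), x i⁆ = x i)
    (hz : ∀ i j, 1 ≤ i → i ≤ n + 1 → 1 ≤ j → j ≤ n + 1 →
      ¬(i = n + 1 ∧ 1 ≤ j ∧ j ≤ n - 1) → ¬(j = n + 1 ∧ 1 ≤ i ∧ i ≤ n - 1) →
      ⁅x i, x j⁆ = 0) :
    lieIndex K L = n - 1 := by
  classical
  have hsp' : ⊤ ≤ Submodule.span K (Set.range fun i : Fin (n + 1) => x (i.1 + 1)) :=
    le_of_eq hsp.symm
  let B : Basis (Fin (n + 1)) K L := Basis.mk hli hsp'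
  have hB : ∀ i : Fin (n + 1), B i = x (i.1 + 1) := fun i => Basis.mk_apply hli hsp' i
  have hFD : FiniteDimensional K L := Module.Finite.of_basis B
  have hdim : finrank K L = n + 1 := by
    rw [finrank_eq_card_basis B, Fintype.card_fin]
  have hcoord : ∀ i j : Fin (n + 1), B.coord i (B j) = if j = i then 1 else 0 := by
    intro i j
    simp [Basis.coord_apply, Basis.repr_self, Finsupp.single_apply]
  have hlast_ne0 : Fin.last n ≠ (0 : Fin (n + 1)) := by
    simp only [Ne, Fin.ext_iff, Fin.val_last, Fin.val_zero]
    omega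
  -- bracket of the last basis vector with small index vectors
  have hlast1 : ∀ j : Fin (n + 1), (j : ℕ) < n - 1 → ⁅B (Fin.last n), B j⁆ = B j := by
    intro j hj
    rw [hB, hB, Fin.val_last]
    exact hbr (j.1 + 1) (by omega) (by omega)
  -- vanishing brackets
  have hzero : ∀ i j : Fin (n + 1), ((i : ℕ) ≠ n ∨ ¬ (j : ℕ) < n - 1) →
      ((j : ℕ) ≠ n ∨ ¬ (i : ℕ) < n - 1) → ⁅B i, B j⁆ = 0 := by
    intro i j h1 h2
    have hi := i.isLt
    have hj := j.isLt
    rw [hB, hB]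
    exact hz (i.1 + 1) (j.1 + 1) (by omega) (by omega) (by omega) (by omega)
      (by omega) (by omega)
  -- the key structural formula : for j ≠ last, ⁅x, B j⁆ = (coord last x) • ⁅B last, B j⁆
  have hsmul : ∀ j : Fin (n + 1), j ≠ Fin.last n → ∀ xx : L,
      ⁅xx, B j⁆ = B.coord (Fin.last n) xx • ⁅B (Fin.last n), B j⁆ := by
    intro j hj
    have key : (-(LieAlgebra.ad K L (B j)) : L →ₗ[K] L)
        = (B.coord (Fin.last n)).smulRight ⁅B (Fin.last n), B j⁆ := by
      apply B.ext
      intro i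
      simp only [LinearMap.neg_apply, LieAlgebra.ad_apply, LinearMap.smulRight_apply]
      by_cases hi : i = Fin.last n
      · subst hi
        rw [hcoord, if_pos rfl, one_smul, ← lie_skew, neg_neg]
      · have hival : (i : ℕ) ≠ n := by
          intro h
          exact hi (Fin.ext (by rw [h, Fin.val_last]))
        have hjval : (j : ℕ) ≠ n := by
          intro h
          exact hj (Fin.ext (by rw [h, Fin.val_last]))
        rw [hcoord, if_neg (fun h => hi h), zero_smul, hzero j i (Or.inl hjval) (Or.inl hival),
          neg_zero]
    intro xx
    have h2 := DFunLike.congr_fun key xx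
    simp only [LinearMap.neg_apply, LieAlgebra.ad_apply, LinearMap.smulRight_apply] at h2
    rw [← lie_skew, h2]
  -- membership criterion
  have hmem : ∀ (f0 : Module.Dual K L) (xx : L),
      (∀ j, f0 ⁅xx, B j⁆ = 0) → xx ∈ lieStab K f0 := by
    intro f0 xx h y
    have key : f0.comp (LieAlgebra.ad K L xx : L →ₗ[K] L) = 0 := by
      apply B.ext
      intro j
      simpa [LieAlgebra.ad_apply] using h j
    have h2 := DFunLike.congr_fun key y
    simpa [LieAlgebra.ad_apply] using h2
  -- coordinate-0 formula for the adjoint of the last vector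
  have hc0 : ∀ xx : L, B.coord 0 ⁅B (Fin.last n), xx⁆ = B.coord 0 xx := by
    have key : (B.coord 0).comp (LieAlgebra.ad K L (B (Fin.last n)) : L →ₗ[K] L)
        = B.coord 0 := by
      apply B.ext
      intro i
      simp only [LinearMap.comp_apply, LieAlgebra.ad_apply]
      by_cases hi : (i : ℕ) < n - 1
      · rw [hlast1 i hi]
      · have hlv : ¬ (Fin.last n : Fin (n + 1)).1 < n - 1 := by
          rw [Fin.val_last]; omega
        rw [hzero (Fin.last n) i (Or.inr hi) (Or.inr hlv), map_zero, hcoord]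
        have hi0 : i ≠ 0 := by
          intro h
          subst h
          simp only [Fin.val_zero] at hi
          omega
        rw [if_neg hi0]
    intro xx
    have h2 := DFunLike.congr_fun key xx
    simpa [LieAlgebra.ad_apply] using h2
  -- the stabilizer of coord 0 equals ker of ψ
  set ψ : L →ₗ[K] K × K := (B.coord 0).prod (B.coord (Fin.last n)) with hψ
  have h0lt : (0 : ℕ) < n - 1 := by omega
  have hstab_eq : lieStab K (B.coord 0) = LinearMap.ker ψ := by
    ext xx
    constructor
    · intro hx
      have h1 : B.coord 0 ⁅xx, B 0⁆ = 0 := hx (B 0)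
      have h2 : B.coord 0 ⁅xx, B (Fin.last n)⁆ = 0 := hx (B (Fin.last n))
      rw [hsmul 0 (fun h => hlast_ne0 h.symm) xx, hlast1 0 h0lt, map_smul, hcoord,
        if_pos rfl, smul_eq_mul, mul_one] at h1
      rw [← lie_skew, map_neg, hc0, neg_eq_zero] at h2
      simp only [LinearMap.mem_ker, hψ, LinearMap.prod_apply, Function.prod, Prod.mk_eq_zero]
      exact ⟨h2, h1⟩
    · intro hx
      simp only [LinearMap.mem_ker, hψ, LinearMap.prod_apply, Function.prod, Prod.mk_eq_zero] at hx
      obtain ⟨h0, hl⟩ := hx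
      apply hmem
      intro j
      by_cases hj : j = Fin.last n
      · subst hj
        rw [← lie_skew, map_neg, hc0, h0, neg_zero]
      · rw [hsmul j hj, hl, zero_smul, map_zero]
  -- ψ is surjective
  have hsurj : Function.Surjective ψ := by
    rintro ⟨a, c⟩
    refine ⟨a • B 0 + c • B (Fin.last n), ?_⟩
    have e1 : B.coord 0 (a • B 0 + c • B (Fin.last n)) = a := by
      rw [map_add, map_smul, map_smul, hcoord, hcoord, if_pos rfl, if_neg hlast_ne0]
      simp
    have e2 : B.coord (Fin.last n) (a • B 0 + c • B (Fin.last n)) = c := by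
      rw [map_add, map_smul, map_smul, hcoord, hcoord, if_pos rfl,
        if_neg (fun h => hlast_ne0 h.symm)]
      simp
    simp only [hψ, LinearMap.prod_apply, Function.prod, e1, e2]
  have hKK : finrank K (K × K) = 2 := by
    simp [Module.finrank_self]
  have hupper_val : finrank K (lieStab K (B.coord 0)) = n - 1 := by
    have hrank := LinearMap.finrank_range_add_finrank_ker ψ
    rw [LinearMap.range_eq_top.mpr hsurj, finrank_top, hKK, hdim] at hrank
    rw [hstab_eq]
    omega
  -- lower bound for arbitrary functionals
  have hlow : ∀ f0 : Module.Dual K L, n - 1 ≤ finrank K (lieStab K f0) := by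
    intro f0
    set φ : L →ₗ[K] K := f0.comp (LieAlgebra.ad K L (B (Fin.last n)) : L →ₗ[K] L) with hφ
    set ψ' : L →ₗ[K] K × K := (B.coord (Fin.last n)).prod φ with hψ'
    have hker_le : LinearMap.ker ψ' ≤ lieStab K f0 := by
      intro xx hx
      simp only [LinearMap.mem_ker, hψ', LinearMap.prod_apply, Function.prod, Prod.mk_eq_zero] at hx
      obtain ⟨hl, hp⟩ := hx
      apply hmem
      intro j
      by_cases hj : j = Fin.last n
      · subst hj
        rw [← lie_skew, map_neg]
        have : f0 ⁅B (Fin.last n), xx⁆ = 0 := by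
          simpa [hφ, LieAlgebra.ad_apply] using hp
        rw [this, neg_zero]
      · rw [hsmul j hj, hl, zero_smul, map_zero]
    have hrank := LinearMap.finrank_range_add_finrank_ker ψ'
    have hrle : finrank K (LinearMap.range ψ') ≤ 2 := by
      have := Submodule.finrank_le (LinearMap.range ψ')
      omega
    rw [hdim] at hrank
    have hker_ge : n - 1 ≤ finrank K (LinearMap.ker ψ') := by omega
    exact le_trans hker_ge (Submodule.finrank_mono hker_le)
  -- conclude
  unfold lieIndex
  apply le_antisymm
  · exact le_trans (ciInf_le (OrderBot.bddBelow _) (B.coord 0)) (le_of_eq hupper_val)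
  · exact le_ciInf hlow
end

section
/- The (2n+1)-dimensional solvable Lie algebra τ_{2n+1}(λ_2) with nilradical Q_{2n}, defined by [x_1,x_k] = x_{k+1} for 2 ≤ k ≤ 2n−2, [x_k, x_{2n+1−k}] = (−1)^k x_{2n} for 2 ≤ k ≤ n, [y,x_1] = x_1, [y,x_k] = (k−2+λ_2) x_k for 2 ≤ k ≤ 2n−2, and [y, x_{2n}] = (2n−3+2λ_2) x_{2n}, has index 1. -/
open Module

set_option maxHeartbeats 2000000 in
theorem stmt19 (K : Type*) [RCLike K]
    (L : Type*) [LieRing L] [LieAlgebra K L]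
    (n : ℕ) (hn : 2 ≤ n) (l : K)
    (x : ℕ → L) (y : L)
    (hli : LinearIndependent K fun i : Fin (2 * n + 1) =>
      if i.1 < 2 * n then x (i.1 + 1) else y)
    (hsp : Submodule.span K (Set.range fun i : Fin (2 * n + 1) =>
      if i.1 < 2 * n then x (i.1 + 1) else y) = ⊤)
    (hbr1 : ∀ k, 2 ≤ k → k ≤ 2 * n - 2 → ⁅x 1, x k⁆ = x (k + 1))
    (hbr2 : ∀ k, 2 ≤ k → k ≤ n → ⁅x k, x (2 * n + 1 - k)⁆ = ((-1 : K)) ^ k • x (2 * n))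
    (hbr3 : ⁅y, x 1⁆ = x 1)
    (hbr4 : ∀ k, 2 ≤ k → k ≤ 2 * n - 2 → ⁅y, x k⁆ = ((k : K) - 2 + l) • x k)
    (hbr5 : ⁅y, x (2 * n)⁆ = ((2 * n : K) - 3 + 2 * l) • x (2 * n))
    (hz1 : ∀ i j, 1 ≤ i → i ≤ 2 * n → 1 ≤ j → j ≤ 2 * n →
      ¬(i = 1 ∧ 2 ≤ j ∧ j ≤ 2 * n - 2) → ¬(j = 1 ∧ 2 ≤ i ∧ i ≤ 2 * n - 2) →
      ¬(2 ≤ i ∧ i ≤ n ∧ j = 2 * n + 1 - i) → ¬(2 ≤ j ∧ j ≤ n ∧ i = 2 * n + 1 - j) →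
      ⁅x i, x j⁆ = 0)
    (hz2 : ⁅y, x (2 * n - 1)⁆ = 0) :
    lieIndex K L = 1 := by
  classical
  -- the basis
  let b : Basis (Fin (2 * n + 1)) K L := Basis.mk hli (by rw [hsp])
  have hb : ∀ i : Fin (2 * n + 1), b i = if i.1 < 2 * n then x (i.1 + 1) else y :=
    fun i => Basis.mk_apply _ _ i
  have hbx : ∀ i : Fin (2 * n + 1), i.1 < 2 * n → b i = x (i.1 + 1) := by
    intro i hi; rw [hb]; simp [hi]
  haveI : FiniteDimensional K L := Module.Finite.of_basis b
  -- membership criterion for lieStab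
  have hmem : ∀ (f : Module.Dual K L) (w : L), w ∈ lieStab K f ↔ ∀ z, f ⁅w, z⁆ = 0 :=
    fun f w => Iff.rfl
  -- the bilinear form attached to f
  let B : Module.Dual K L → L →ₗ[K] L →ₗ[K] K := fun f =>
    LinearMap.mk₂ K (fun u v => f ⁅u, v⁆)
      (by intros; rw [add_lie, map_add])
      (by intros; rw [smul_lie, map_smul])
      (by intros; rw [lie_add, map_add])
      (by intros; rw [lie_smul, map_smul])
  have hB : ∀ f (u v : L), B f u v = f ⁅u, v⁆ := fun f u v => rfl
  -- LOWER BOUND : every stabilizer has positive dimension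
  have hlow : ∀ f : Module.Dual K L, 1 ≤ finrank K (lieStab K f) := by
    intro f
    let M : Matrix (Fin (2 * n + 1)) (Fin (2 * n + 1)) K :=
      Matrix.of fun i j => f ⁅b j, b i⁆
    have hM : ∀ i j, M i j = f ⁅b j, b i⁆ := fun i j => rfl
    have hdet : M.det = 0 := by
      have hT : M.transpose = -M := by
        ext i j
        rw [Matrix.transpose_apply, Matrix.neg_apply, hM, hM, ← lie_skew, map_neg]
      have h1 : M.det = (-1) ^ (Fintype.card (Fin (2 * n + 1))) * M.det := by
        conv_lhs => rw [← Matrix.det_transpose, hT, Matrix.det_neg]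
      rw [Fintype.card_fin] at h1
      have hodd : (-1 : K) ^ (2 * n + 1) = -1 := Odd.neg_one_pow ⟨n, by ring⟩
      rw [hodd, neg_one_mul] at h1
      have h2 : (2 : K) * M.det = 0 := by linear_combination h1
      rcases mul_eq_zero.mp h2 with h | h
      · exact absurd h two_ne_zero
      · exact h
    obtain ⟨v, hv0, hv⟩ := Matrix.exists_mulVec_eq_zero_iff.mpr hdet
    set w : L := ∑ j, v j • b j with hwdef
    have hwne : w ≠ 0 := by
      intro h
      exact hv0 (funext (Fintype.linearIndependent_iff.mp b.linearIndependent v h))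
    have hwstab : w ∈ lieStab K f := by
      rw [hmem]
      have hbz : ∀ j, f ⁅w, b j⁆ = 0 := by
        intro j
        have h1 : f ⁅w, b j⁆ = ∑ i, v i * f ⁅b i, b j⁆ := by
          rw [← hB, hwdef, map_sum, LinearMap.sum_apply]
          refine Finset.sum_congr rfl fun i _ => ?_
          rw [map_smul, LinearMap.smul_apply, smul_eq_mul, hB]
        rw [h1]
        have h2 := congrFun hv j
        simp only [Matrix.mulVec, dotProduct, Pi.zero_apply, Matrix.of_apply] at h2
        rw [← h2]
        exact Finset.sum_congr rfl fun i _ => mul_comm _ _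
      intro z
      have hz : z = ∑ j, b.repr z j • b j := (b.sum_repr z).symm
      rw [← hB, hz, map_sum]
      simp only [map_smul, smul_eq_mul]
      refine Finset.sum_eq_zero fun j _ => ?_
      rw [hB] at *
      rw [hbz j, mul_zero]
    have : Nontrivial (lieStab K f) := by
      refine ⟨⟨w, hwstab⟩, 0, ?_⟩
      simp only [ne_eq, Submodule.mk_eq_zero]
      exact hwne
    have := Module.finrank_pos (R := K) (M := lieStab K f)
    omega
  -- the distinguished functional
  set i0 : Fin (2 * n + 1) := ⟨0, by omega⟩ with hi0def
  set i1 : Fin (2 * n + 1) := ⟨2 * n - 1, by omega⟩ with hi1def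
  set iy : Fin (2 * n + 1) := ⟨2 * n, by omega⟩ with hiydef
  have hi0ne1 : i0 ≠ i1 := by simp [hi0def, hi1def, Fin.ext_iff]; omega
  have hbi0 : b i0 = x 1 := by rw [hbx i0 (by simp [hi0def]; omega)]
  have hbi1 : b i1 = x (2 * n) := by
    rw [hbx i1 (by simp [hi1def]; omega)]
    congr 1
    simp [hi1def]; omega
  have hbiy : b iy = y := by rw [hb]; simp [hiydef]
  have heq0 : ∀ (k : ℕ) (hk : k < 2 * n + 1), ((⟨k, hk⟩ : Fin (2 * n + 1)) = i0) ↔ k = 0 := by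
    intro k hk; rw [hi0def]; simp [Fin.ext_iff]
  have heq1 : ∀ (k : ℕ) (hk : k < 2 * n + 1),
      ((⟨k, hk⟩ : Fin (2 * n + 1)) = i1) ↔ k = 2 * n - 1 := by
    intro k hk; rw [hi1def]; simp [Fin.ext_iff]
  set f₀ : Module.Dual K L := b.coord i0 + b.coord i1 with hf₀
  have hfb : ∀ i : Fin (2 * n + 1),
      f₀ (b i) = (if i = i0 then (1 : K) else 0) + (if i = i1 then 1 else 0) := by
    intro i
    simp [hf₀, Basis.coord_apply, Basis.repr_self, Finsupp.single_apply]
  -- values of f₀ on the x's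
  have fx : ∀ m, 1 ≤ m → m ≤ 2 * n →
      f₀ (x m) = (if m = 1 then (1 : K) else 0) + (if m = 2 * n then 1 else 0) := by
    intro m hm1 hm2
    have hlt : m - 1 < 2 * n := by omega
    have hx : x m = b ⟨m - 1, by omega⟩ := by
      rw [hbx ⟨m - 1, by omega⟩ hlt]
      congr 1
      show m = m - 1 + 1
      omega
    rw [hx, hfb]
    congr 1
    · simp only [heq0]
      by_cases h : m = 1
      · rw [if_pos h, if_pos (by omega)]
      · rw [if_neg h, if_neg (by omega)]
    · simp only [heq1]
      by_cases h : m = 2 * n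
      · rw [if_pos h, if_pos (by omega)]
      · rw [if_neg h, if_neg (by omega)]
  have fx0 : ∀ m, 2 ≤ m → m ≤ 2 * n - 1 → f₀ (x m) = 0 := by
    intro m h1 h2; rw [fx m (by omega) (by omega)]
    rw [if_neg (by omega), if_neg (by omega), add_zero]
  have fx1 : f₀ (x 1) = 1 := by rw [fx 1 le_rfl (by omega)]; rw [if_pos rfl, if_neg (by omega), add_zero]
  have fx2n : f₀ (x (2 * n)) = 1 := by
    rw [fx (2 * n) (by omega) le_rfl]; rw [if_neg (by omega), if_pos rfl, zero_add]
  -- f₀ kills almost all brackets of x's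
  have Fval : ∀ i j : ℕ, 1 ≤ i → i ≤ 2 * n → 1 ≤ j → j ≤ 2 * n →
      ¬(i + j = 2 * n + 1 ∧ 2 ≤ i ∧ 2 ≤ j) → f₀ ⁅x i, x j⁆ = 0 := by
    intro i j hi1 hi2 hj1 hj2 hnot
    by_cases hi : i = 1
    · subst hi
      by_cases hj : j = 1
      · subst hj; rw [lie_self, map_zero]
      · by_cases hj2' : j ≤ 2 * n - 2
        · rw [hbr1 j (by omega) hj2']
          exact fx0 (j + 1) (by omega) (by omega)
        · rw [hz1 1 j (by omega) (by omega) hj1 hj2 (by omega) (by omega) (by omega)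
            (by omega), map_zero]
    · by_cases hj : j = 1
      · subst hj
        by_cases hi2' : i ≤ 2 * n - 2
        · rw [← lie_skew, hbr1 i (by omega) hi2', map_neg,
            fx0 (i + 1) (by omega) (by omega), neg_zero]
        · rw [hz1 i 1 hi1 hi2 (by omega) (by omega) (by omega) (by omega) (by omega)
            (by omega), map_zero]
      · have hij : ¬(i + j = 2 * n + 1) := by omega
        rw [hz1 i j hi1 hi2 hj1 hj2 (by omega) (by omega) (by omega) (by omega), map_zero]
  have hyrow : ∀ k, 2 ≤ k → k ≤ 2 * n - 1 → f₀ ⁅y, x k⁆ = 0 := by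
    intro k h1 h2
    by_cases h : k ≤ 2 * n - 2
    · rw [hbr4 k h1 h, map_smul, fx0 k h1 (by omega), smul_zero]
    · have : k = 2 * n - 1 := by omega
      rw [this, hz2, map_zero]
  -- the nonzero pairings
  have hpair : ∀ i j : ℕ, 2 ≤ i → i ≤ 2 * n - 1 → i + j = 2 * n + 1 →
      ∃ s : K, s ≠ 0 ∧ f₀ ⁅x i, x j⁆ = s := by
    intro i j hi1 hi2 hij
    by_cases hi : i ≤ n
    · refine ⟨(-1) ^ i, pow_ne_zero _ (neg_ne_zero.mpr one_ne_zero), ?_⟩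
      have hj : j = 2 * n + 1 - i := by omega
      rw [hj, hbr2 i hi1 hi, map_smul, fx2n, smul_eq_mul, mul_one]
    · refine ⟨-(-1) ^ j, neg_ne_zero.mpr (pow_ne_zero _ (neg_ne_zero.mpr one_ne_zero)), ?_⟩
      have h1 : ⁅x j, x i⁆ = (-1 : K) ^ j • x (2 * n) := by
        have hi' : i = 2 * n + 1 - j := by omega
        rw [hi']; exact hbr2 j (by omega) (by omega)
      rw [← lie_skew, h1, map_neg, map_smul, fx2n, smul_eq_mul, mul_one]
  -- UPPER BOUND
  set μ : K := (2 * n : K) - 3 + 2 * l with hμ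
  set v : L := x (2 * n) - μ • x 1 with hv
  have hvne : v ≠ 0 := by
    intro h
    have h2 := congrArg (fun u => b.repr u i1) h
    simp only [map_zero, Finsupp.coe_zero, Pi.zero_apply] at h2
    rw [hv, ← hbi0, ← hbi1] at h2
    simp [Finsupp.single_apply, hi0ne1] at h2
  have hsub : lieStab K f₀ ≤ Submodule.span K {v} := by
    intro w hw
    rw [hmem] at hw
    set c : Fin (2 * n + 1) → K := fun i => b.repr w i with hc
    have hwr : w = ∑ i, c i • b i := (b.sum_repr w).symm
    -- generic row computation
    have hrow : ∀ (z : L) (e : Fin (2 * n + 1) → K),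
        (∀ i, f₀ ⁅b i, z⁆ = e i) → ∑ i, c i * e i = 0 := by
      intro z e he
      have h1 : f₀ ⁅w, z⁆ = ∑ i, c i * e i := by
        rw [← hB, hwr, map_sum, LinearMap.sum_apply]
        refine Finset.sum_congr rfl fun i _ => ?_
        rw [map_smul, LinearMap.smul_apply, smul_eq_mul, hB, he i]
      rw [← h1, hw z]
    -- column x 1 : coefficient of y is zero
    have hcy : c iy = 0 := by
      have h := hrow (b i0) (fun i => if i = iy then 1 else 0) ?_
      · simpa using h
      · intro i
        by_cases hiy : i = iy
        · subst hiy; rw [hbiy, hbi0, hbr3, fx1, if_pos rfl]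
        · rw [if_neg hiy]
          have hilt : i.1 < 2 * n := by
            have := i.2
            have : i.1 ≠ 2 * n := fun h => hiy (Fin.ext (by simp [hiydef, h]))
            omega
          rw [hbx i hilt, hbi0]
          exact Fval (i.1 + 1) 1 (by omega) (by omega) le_rfl (by omega) (by omega)
    -- middle columns : coefficients of x_2 .. x_{2n-1} vanish
    have hcp : ∀ p : Fin (2 * n + 1), 1 ≤ p.1 → p.1 ≤ 2 * n - 2 → c p = 0 := by
      intro p hp1 hp2
      set j : Fin (2 * n + 1) := ⟨2 * n - 1 - p.1, by omega⟩ with hjdef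
      obtain ⟨s, hs0, hsv⟩ := hpair (p.1 + 1) (j.1 + 1) (by omega) (by omega)
        (by simp [hjdef]; omega)
      have h := hrow (b j) (fun i => if i = p then s else 0) ?_
      · have : c p * s = 0 := by simpa using h
        exact (mul_eq_zero.mp this).resolve_right hs0
      · intro i
        by_cases hip : i = p
        · subst hip
          rw [if_pos rfl, hbx j (by simp [hjdef]; omega), hbx i (by omega)]
          exact hsv
        · rw [if_neg hip]
          by_cases hiy : i = iy
          · subst hiy
            rw [hbiy, hbx j (by simp [hjdef]; omega)]
            exact hyrow (j.1 + 1) (by simp [hjdef]; omega) (by simp only [hjdef, Fin.val_mk]; omega)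
          · have hilt : i.1 < 2 * n := by
              have := i.2
              have : i.1 ≠ 2 * n := fun h => hiy (Fin.ext (by simp [hiydef, h]))
              omega
            have hipn : i.1 ≠ p.1 := fun h => hip (Fin.ext h)
            rw [hbx i hilt, hbx j (by simp [hjdef]; omega)]
            exact Fval (i.1 + 1) (j.1 + 1) (by omega) (by omega) (by omega)
              (by simp [hjdef]; omega) (by simp [hjdef]; omega)
    -- column y : relation between c i0 and c i1
    have hrel : c i0 + μ * c i1 = 0 := by
      have h := hrow y
        (fun i => (if i = i0 then (-1 : K) else 0) + (if i = i1 then -μ else 0)) ?_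
      · simp only [mul_add, Finset.sum_add_distrib, mul_ite, mul_zero,
          Finset.sum_ite_eq', Finset.mem_univ, if_true] at h
        linear_combination -h
      · intro i
        by_cases hii0 : i = i0
        · subst hii0
          rw [hbi0, ← lie_skew, map_neg, hbr3, fx1, if_pos rfl, if_neg hi0ne1, add_zero]
        · by_cases hii1 : i = i1
          · subst hii1
            rw [hbi1, ← lie_skew, map_neg, hbr5, map_smul, fx2n, smul_eq_mul, mul_one,
              if_neg (fun h => hi0ne1 h.symm), if_pos rfl, zero_add]
          · rw [if_neg hii0, if_neg hii1, add_zero]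
            by_cases hiy : i = iy
            · subst hiy; rw [hbiy, lie_self, map_zero]
            · have hilt : i.1 < 2 * n := by
                have := i.2
                have : i.1 ≠ 2 * n := fun h => hiy (Fin.ext (by simp [hiydef, h]))
                omega
              have h1 : 1 ≤ i.1 := by
                rcases Nat.eq_zero_or_pos i.1 with h | h
                · exact absurd (Fin.ext (by simp [hi0def, h])) hii0
                · exact h
              have h2 : i.1 ≤ 2 * n - 2 := by
                have : i.1 ≠ 2 * n - 1 := fun h => hii1 (Fin.ext (by simp [hi1def, h]))
                omega
              rw [hbx i hilt, ← lie_skew, map_neg, hyrow (i.1 + 1) (by omega) (by omega),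
                neg_zero]
    -- conclude : w is a multiple of v
    have hwv : w = c i1 • v := by
      rw [hwr]
      have hzero : ∀ i ∈ (Finset.univ : Finset (Fin (2 * n + 1))),
          i ∉ ({i0, i1} : Finset (Fin (2 * n + 1))) → c i • b i = 0 := by
        intro i _ hi
        simp only [Finset.mem_insert, Finset.mem_singleton] at hi
        push_neg at hi
        by_cases hiy : i = iy
        · subst hiy; rw [hcy, zero_smul]
        · have hilt : i.1 < 2 * n := by
            have := i.2
            have : i.1 ≠ 2 * n := fun h => hiy (Fin.ext (by simp [hiydef, h]))
            omega
          have h1 : 1 ≤ i.1 := by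
            rcases Nat.eq_zero_or_pos i.1 with h | h
            · exact absurd (Fin.ext (by simp [hi0def, h])) hi.1
            · exact h
          have h2 : i.1 ≤ 2 * n - 2 := by
            have : i.1 ≠ 2 * n - 1 := fun h => hi.2 (Fin.ext (by simp [hi1def, h]))
            omega
          rw [hcp i h1 h2, zero_smul]
      rw [← Finset.sum_subset (Finset.subset_univ ({i0, i1} : Finset (Fin (2 * n + 1))))
        (fun i hu hni => hzero i hu hni)]
      rw [Finset.sum_pair hi0ne1, hbi0, hbi1, hv]
      have hc0 : c i0 = -(μ * c i1) := by linear_combination hrel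
      rw [hc0]
      module
    rw [hwv]
    exact Submodule.smul_mem _ _ (Submodule.mem_span_singleton_self v)
  have hupeq : finrank K (lieStab K f₀) = 1 := by
    have h1 : finrank K (lieStab K f₀) ≤ 1 := by
      calc finrank K (lieStab K f₀) ≤ finrank K (Submodule.span K {v}) :=
            Submodule.finrank_mono hsub
        _ = 1 := finrank_span_singleton hvne
    exact le_antisymm h1 (hlow f₀)
  -- conclusion
  rw [lieIndex]
  refine le_antisymm ?_ (le_ciInf hlow)
  calc ⨅ f : Module.Dual K L, finrank K (lieStab K f) ≤ finrank K (lieStab K f₀) :=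
        ciInf_le (OrderBot.bddBelow _) f₀
    _ = 1 := hupeq
end
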